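/- Let X be a set and H a finite-dimensional complex subspace of the space of functions X → ℂ (with pointwise operations), equipped with an inner product making H a complex inner product space. For an orthonormal basis (ψ_i) of H define the Bergman kernel K(x,y) := Σ_i ψ_i(x) · conj(ψ_i(y)) and the Bergman function B(x) := Σ_i |ψ_i(x)|². Fix x ∈ X and let α ∈ H be an extremal at x, i.e. ‖α‖ = 1 and |α(x)|² = B(x). Then for every y ∈ X, |K(x,y)|² = |α(y)|² · B(x). -/

import Mathlib

local notation "⟪" x ", " y "⟫_ℂ" => @inner ℂ _ _ x y


/-- (Proposition "K is extremal".) Let `E` be a finite-dimensional inner product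
space of functions on `X` (realized via an injective linear map `ι : E →ₗ[ℂ] (X → ℂ)`), with
orthonormal basis `(ψ_i)`, Bergman kernel `K(x,y) = Σ_i ψ_i(x) conj(ψ_i(y))` and Bergman function
`B(x) = Σ_i |ψ_i(x)|²`. If `α` is an extremal at `x`, i.e. `‖α‖ = 1` and `|α(x)|² = B(x)`, then
`|K(x,y)|² = |α(y)|² · B(x)` for every `y`. -/
theorem bergman_kernel_via_extremal
    {X E : Type*} [NormedAddCommGroup E] [InnerProductSpace ℂ E]
    [FiniteDimensional ℂ E]
    (ι : E →ₗ[ℂ] (X → ℂ)) (hι : Function.Injective ι)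
    {n : ℕ} (ψ : OrthonormalBasis (Fin n) ℂ E)
    (x : X) (α : E) (hα : ‖α‖ = 1)
    (hext : ‖ι α x‖ ^ 2 = ∑ i, ‖ι (ψ i) x‖ ^ 2) :
    ∀ y : X,
      ‖∑ i, ι (ψ i) x * (starRingEnd ℂ) (ι (ψ i) y)‖ ^ 2
        = ‖ι α y‖ ^ 2 * ∑ i, ‖ι (ψ i) x‖ ^ 2 := by
  intro y
  -- the representing vector of evaluation at x
  set v : E := ∑ i, (starRingEnd ℂ) (ι (ψ i) x) • ψ i with hv
  -- ι v at any point
  have hιv : ∀ z : X, ι v z = ∑ i, (starRingEnd ℂ) (ι (ψ i) x) * ι (ψ i) z := by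
    intro z
    rw [hv, map_sum]
    simp [Finset.sum_apply]
  -- inner product with v is evaluation at x
  have hinner : ∀ β : E, ⟪v, β⟫_ℂ = ι β x := by
    intro β
    rw [hv, sum_inner]
    have : ∀ i, ⟪(starRingEnd ℂ) (ι (ψ i) x) • ψ i, β⟫_ℂ = ι (ψ i) x * ⟪ψ i, β⟫_ℂ := by
      intro i; rw [inner_smul_left]; simp
    rw [Finset.sum_congr rfl fun i _ => this i]
    conv_rhs => rw [← ψ.sum_repr' β]
    rw [map_sum]
    simp [Finset.sum_apply, mul_comm]
  -- the Bergman function equals ‖v‖²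
  have hB : ‖v‖ ^ 2 = ∑ i, ‖ι (ψ i) x‖ ^ 2 := by
    have h1 : (⟪v, v⟫_ℂ) = ∑ i, (starRingEnd ℂ) (ι (ψ i) x) * ι (ψ i) x := by
      rw [hinner v, hιv x]
    have h2 := congrArg Complex.re h1
    rw [← inner_self_eq_norm_sq (𝕜 := ℂ) v, RCLike.re_to_complex, h2, Complex.re_sum]
    refine Finset.sum_congr rfl fun i _ => ?_
    rw [mul_comm, Complex.mul_conj]
    rw [Complex.ofReal_re, Complex.normSq_eq_norm_sq]
  -- the kernel is the conjugate of ι v y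
  have hK : ‖∑ i, ι (ψ i) x * (starRingEnd ℂ) (ι (ψ i) y)‖ = ‖ι v y‖ := by
    rw [hιv y]
    rw [← RCLike.norm_conj (K := ℂ)]
    congr 1
    rw [map_sum]
    refine Finset.sum_congr rfl fun i _ => ?_
    simp [mul_comm]
  rw [hK, ← hB]
  rw [← hB] at hext
  by_cases hv0 : v = 0
  · simp [hv0]
  · -- equality in Cauchy-Schwarz
    have hα0 : α ≠ 0 := by
      intro h; rw [h, norm_zero] at hα; exact one_ne_zero hα.symm
    have hcs : ‖⟪v, α⟫_ℂ‖ = ‖v‖ * ‖α‖ := by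
      have : ‖⟪v, α⟫_ℂ‖ ^ 2 = (‖v‖ * ‖α‖) ^ 2 := by
        rw [hinner α, hext, hα, mul_one]
      have h1 : (0:ℝ) ≤ ‖⟪v, α⟫_ℂ‖ := norm_nonneg _
      have h2 : (0:ℝ) ≤ ‖v‖ * ‖α‖ := by positivity
      nlinarith
    obtain ⟨r, hr0, hrv⟩ := (norm_inner_eq_norm_iff hv0 hα0).mp hcs
    -- ‖r‖² * ‖v‖² = 1
    have hnr : ‖r‖ ^ 2 * ‖v‖ ^ 2 = 1 := by
      have : ‖α‖ = ‖r‖ * ‖v‖ := by rw [hrv, norm_smul]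
      rw [hα] at this
      nlinarith
    have hy : ι α y = r * ι v y := by
      rw [hrv, map_smul]; rfl
    rw [hy]
    have : ‖r * ι v y‖ ^ 2 = ‖r‖ ^ 2 * ‖ι v y‖ ^ 2 := by
      rw [norm_mul]; ring
    rw [this]
    nlinarith [norm_nonneg (ι v y), sq_nonneg (‖ι v y‖)]
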